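/- If a Markov operator cocycle (P,σ) is asymptotically periodic with period r > 1, then (P,σ) is not posterior mixing for inhomogeneous observables in B(Ω, L^∞(X,m)). Specifically, with invariant density h_ω = (1/r)Σ_i g_i^ω and φ_ω = 1_{supp g_1^ω}, for every n the integral ∫_X P_ω^{(n)}(h_ω − g_1^ω) · φ_{σ^n ω} dm equals 1/r if ρ_ω^n(1) ≠ 1 and 1/r − 1 if ρ_ω^n(1) = 1; in particular it is bounded away from 0. -/

import Mathlib

open MeasureTheory Filter Topology ENNReal

/-- The cocycle `P_ω^{(n)} = P_{σ^{n-1}ω} ∘ ⋯ ∘ P_ω` generated by a family of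
operators over the driving system `σ`. -/
noncomputable def coc {Ω M : Type*} [Monoid M] (P : Ω → M) (σ : Ω → Ω) : ℕ → Ω → M
  | 0, _ => 1
  | n + 1, ω => P (σ^[n] ω) * coc P σ n ω

section helpers

variable {X : Type*} [MeasurableSpace X] {m : Measure X}

lemma linf_ae_bound (φ : Lp ℝ ⊤ m) : ∀ᵐ x ∂m, ‖φ x‖ ≤ ‖φ‖ := by
  have h := ae_le_eLpNormEssSup (f := (φ : X → ℝ)) (μ := m)
  have hne : eLpNormEssSup (φ : X → ℝ) m ≠ ⊤ := by
    have := Lp.eLpNorm_ne_top φ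
    rwa [eLpNorm_exponent_top] at this
  filter_upwards [h] with x hx
  have h2 : ((‖φ x‖₊ : ℝ≥0∞)).toReal ≤ (eLpNormEssSup (φ : X → ℝ) m).toReal :=
    ENNReal.toReal_mono hne hx
  simpa [Lp.norm_def, eLpNorm_exponent_top] using h2

lemma pair_integrable (u : Lp ℝ 1 m) (φ : Lp ℝ ⊤ m) :
    Integrable (fun x => u x * φ x) m := by
  have := Integrable.bdd_mul (c := ‖φ‖) (L1.integrable_coeFn u)
    (Lp.aestronglyMeasurable φ) (linf_ae_bound φ)
  simpa [mul_comm] using this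

lemma pair_abs_le (u : Lp ℝ 1 m) (φ : Lp ℝ ⊤ m) :
    |∫ x, u x * φ x ∂m| ≤ ‖u‖ * ‖φ‖ := by
  have h1 : |∫ x, u x * φ x ∂m| ≤ ∫ x, ‖u x * φ x‖ ∂m := by
    simpa [Real.norm_eq_abs] using
      norm_integral_le_integral_norm (fun x => u x * φ x) (μ := m)
  have h2 : ∫ x, ‖u x * φ x‖ ∂m ≤ ∫ x, ‖u x‖ * ‖φ‖ ∂m := by
    refine integral_mono_ae (pair_integrable u φ).norm
      ((L1.integrable_coeFn u).norm.mul_const _) ?_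
    filter_upwards [linf_ae_bound φ] with x hx
    rw [norm_mul]
    exact mul_le_mul_of_nonneg_left hx (norm_nonneg _)
  have h3 : ∫ x, ‖u x‖ * ‖φ‖ ∂m = ‖u‖ * ‖φ‖ := by
    rw [integral_mul_const, ← L1.norm_eq_integral_norm]
  linarith

lemma lp_coeFn_sum {ι : Type*} (s : Finset ι) (u : ι → Lp ℝ 1 m) :
    (⇑(∑ i ∈ s, u i) : X → ℝ) =ᵐ[m] fun x => ∑ i ∈ s, u i x := by
  classical
  induction s using Finset.induction with
  | empty => simp only [Finset.sum_empty]; exact Lp.coeFn_zero (E := ℝ) (p := 1) (μ := m)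
  | @insert a s ha ih =>
    rw [Finset.sum_insert ha]
    filter_upwards [Lp.coeFn_add (u a) (∑ i ∈ s, u i), ih] with x h1 h2
    simp only [h1, Pi.add_apply, h2, Finset.sum_insert ha]

lemma pair_sub (u v : Lp ℝ 1 m) (φ : Lp ℝ ⊤ m) :
    ∫ x, ((u - v : Lp ℝ 1 m)) x * φ x ∂m
      = ∫ x, u x * φ x ∂m - ∫ x, v x * φ x ∂m := by
  rw [← integral_sub (pair_integrable u φ) (pair_integrable v φ)]
  refine integral_congr_ae ?_
  filter_upwards [Lp.coeFn_sub u v] with x hx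
  rw [hx, Pi.sub_apply, sub_mul]

lemma pair_comb {r : ℕ} (c : ℝ) (u : Fin r → Lp ℝ 1 m) (v : Lp ℝ 1 m) (φ : Lp ℝ ⊤ m) :
    ∫ x, ((c • (∑ i, u i) - v : Lp ℝ 1 m)) x * φ x ∂m
      = c * (∑ i, ∫ x, (u i) x * φ x ∂m) - ∫ x, v x * φ x ∂m := by
  have h1 : (fun x => ((c • (∑ i, u i) - v : Lp ℝ 1 m)) x * φ x)
      =ᵐ[m] fun x => c * (∑ i, (u i) x * φ x) - v x * φ x := by
    filter_upwards [Lp.coeFn_sub (c • (∑ i, u i)) v, Lp.coeFn_smul c (∑ i, u i),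
      lp_coeFn_sum Finset.univ u] with x h1 h2 h3
    simp only [h1, Pi.sub_apply, h2, Pi.smul_apply, h3, smul_eq_mul]
    rw [sub_mul, mul_assoc, Finset.sum_mul]
  rw [integral_congr_ae h1, integral_sub ((integrable_finset_sum _
    (fun i _ => pair_integrable (u i) φ)).const_mul c) (pair_integrable v φ),
    integral_const_mul, integral_finset_sum _ (fun i _ => pair_integrable (u i) φ)]

lemma integral_comb {r : ℕ} (c : ℝ) (u : Fin r → Lp ℝ 1 m) (v : Lp ℝ 1 m) :
    ∫ x, ((c • (∑ i, u i) - v : Lp ℝ 1 m)) x ∂m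
      = c * (∑ i, ∫ x, (u i) x ∂m) - ∫ x, v x ∂m := by
  have h1 : (fun x => ((c • (∑ i, u i) - v : Lp ℝ 1 m)) x)
      =ᵐ[m] fun x => c * (∑ i, (u i) x) - v x := by
    filter_upwards [Lp.coeFn_sub (c • (∑ i, u i)) v, Lp.coeFn_smul c (∑ i, u i),
      lp_coeFn_sum Finset.univ u] with x h1 h2 h3
    simp only [h1, Pi.sub_apply, h2, Pi.smul_apply, h3, smul_eq_mul]
  rw [integral_congr_ae h1, integral_sub ((integrable_finset_sum _
    (fun i _ => L1.integrable_coeFn (u i))).const_mul c) (L1.integrable_coeFn v),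
    integral_const_mul, integral_finset_sum _ (fun i _ => L1.integrable_coeFn (u i))]

lemma l1_norm_of_nonneg (v : Lp ℝ 1 m) (hv : 0 ≤ v) : ‖v‖ = ∫ x, v x ∂m := by
  rw [L1.norm_eq_integral_norm]
  refine integral_congr_ae ?_
  have h0 : (0 : X → ℝ) ≤ᵐ[m] v := (Lp.coeFn_nonneg _).2 hv
  filter_upwards [h0] with x hx
  simp only [Pi.zero_apply] at hx
  simp [Real.norm_eq_abs, abs_of_nonneg hx]

lemma markov_contraction (Q : Module.End ℝ (Lp ℝ 1 m))
    (hpos : ∀ f : Lp ℝ 1 m, 0 ≤ f → 0 ≤ Q f)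
    (hint : ∀ f : Lp ℝ 1 m, ∫ x, (Q f) x ∂m = ∫ x, f x ∂m)
    (u : Lp ℝ 1 m) : ‖Q u‖ ≤ ‖u‖ := by
  have hpp : (0 : Lp ℝ 1 m) ≤ u⁺ := posPart_nonneg u
  have hnp : (0 : Lp ℝ 1 m) ≤ u⁻ := negPart_nonneg u
  have h1 : ‖Q u‖ ≤ ‖Q u⁺‖ + ‖Q u⁻‖ := by
    calc ‖Q u‖ = ‖Q u⁺ - Q u⁻‖ := by rw [← map_sub, posPart_sub_negPart]
    _ ≤ ‖Q u⁺‖ + ‖Q u⁻‖ := norm_sub_le _ _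
  have h2 : ‖Q u⁺‖ = ∫ x, (u⁺ : Lp ℝ 1 m) x ∂m := by
    rw [l1_norm_of_nonneg _ (hpos _ hpp), hint]
  have h3 : ‖Q u⁻‖ = ∫ x, (u⁻ : Lp ℝ 1 m) x ∂m := by
    rw [l1_norm_of_nonneg _ (hpos _ hnp), hint]
  have h4 : ‖u‖ = ∫ x, (u⁺ : Lp ℝ 1 m) x ∂m + ∫ x, (u⁻ : Lp ℝ 1 m) x ∂m := by
    rw [← norm_abs_eq_norm u, ← posPart_add_negPart u,
      l1_norm_of_nonneg _ (add_nonneg hpp hnp)]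
    rw [← integral_add (L1.integrable_coeFn _) (L1.integrable_coeFn _)]
    refine integral_congr_ae ?_
    filter_upwards [Lp.coeFn_add (u⁺) (u⁻)] with x hx
    rw [hx, Pi.add_apply]
  linarith

end helpers


lemma coc_succ {Ω M : Type*} [Monoid M] (P : Ω → M) (σ : Ω → Ω) (n : ℕ) (ω : Ω) :
    coc P σ (n + 1) ω = P (σ^[n] ω) * coc P σ n ω := rfl

lemma coc_zero {Ω M : Type*} [Monoid M] (P : Ω → M) (σ : Ω → Ω) (ω : Ω) :
    coc P σ 0 ω = 1 := rfl

/-- If a Markov operator cocycle `(P,σ)` is asymptotically periodic with period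
`r > 1`, then `(P,σ)` is not posterior mixing for inhomogeneous observables in
`B(Ω, L^∞(X,m))`. -/
theorem asymptotically_periodic_not_posterior_mixing_of_period_gt_one
    {X : Type*} [MeasurableSpace X] (m : Measure X) [IsProbabilityMeasure m]
    {Ω : Type*} [MeasurableSpace Ω] (Pr : Measure Ω) [IsProbabilityMeasure Pr]
    (σ : Ω → Ω) (hσ : MeasurePreserving σ Pr Pr)
    (P : Ω → Module.End ℝ (Lp ℝ 1 m))
    (hP : ∀ᵐ ω ∂Pr, (∀ f : Lp ℝ 1 m, 0 ≤ f → 0 ≤ P ω f) ∧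
      ∀ f : Lp ℝ 1 m, ∫ x, (P ω f) x ∂m = ∫ x, f x ∂m)
    (r : ℕ) (hr : 1 < r)
    (g : Fin r → Ω → Lp ℝ 1 m) (lam : Fin r → Ω → (Lp ℝ 1 m →L[ℝ] ℝ))
    (ρ : Ω → Equiv.Perm (Fin r))
    (hgmeas : ∀ i, StronglyMeasurable (g i))
    (hdens : ∀ᵐ ω ∂Pr, ∀ i, 0 ≤ g i ω ∧ ∫ x, (g i ω) x ∂m = 1)
    (hdisj : ∀ᵐ ω ∂Pr, ∀ i j, i ≠ j → g i ω ⊓ g j ω = 0)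
    (hperm : ∀ᵐ ω ∂Pr, ∀ i, P ω (g i ω) = g (ρ ω i) (σ ω))
    (hconv : ∀ᵐ ω ∂Pr, ∀ f : Lp ℝ 1 m,
      Tendsto (fun n => ‖coc P σ n ω (f - ∑ i, lam i ω f • g i ω)‖) atTop (𝓝 0)) :
    ¬ (∀ (f : Lp ℝ 1 m), ∫ x, f x ∂m = 0 →
        ∀ (G : Ω → Lp ℝ ⊤ m), StronglyMeasurable G → (∃ C : ℝ, ∀ ω, ‖G ω‖ ≤ C) →
          ∀ᵐ ω ∂Pr,
            Tendsto (fun n => ∫ x, (coc P σ n ω f) x * (G (σ^[n] ω)) x ∂m)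
              atTop (𝓝 0)) := by
  classical
  intro H
  have hr0 : (0:ℝ) < r := by exact_mod_cast Nat.lt_of_lt_of_le Nat.zero_lt_one hr.le
  have hr2 : (2:ℝ) ≤ r := by exact_mod_cast hr
  set δ : ℝ := (4 * (r:ℝ))⁻¹ with hδdef
  have hδpos : 0 < δ := by rw [hδdef]; positivity
  set i₀ : Fin r := ⟨0, by omega⟩ with hi₀
  -- the full measure set of good points
  have hQ : ∀ᵐ ω ∂Pr, (∀ f : Lp ℝ 1 m, 0 ≤ f → 0 ≤ P ω f) ∧
      (∀ f : Lp ℝ 1 m, ∫ x, (P ω f) x ∂m = ∫ x, f x ∂m) ∧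
      (∀ i, 0 ≤ g i ω ∧ ∫ x, (g i ω) x ∂m = 1) ∧
      (∀ i j, i ≠ j → g i ω ⊓ g j ω = 0) ∧
      (∀ i, P ω (g i ω) = g (ρ ω i) (σ ω)) := by
    filter_upwards [hP, hdens, hdisj, hperm] with ω h1 h2 h3 h4
    exact ⟨h1.1, h1.2, h2, h3, h4⟩
  set Good : Set Ω := {ω | ∀ n : ℕ, (∀ f : Lp ℝ 1 m, 0 ≤ f → 0 ≤ P (σ^[n] ω) f) ∧
      (∀ f : Lp ℝ 1 m, ∫ x, (P (σ^[n] ω) f) x ∂m = ∫ x, f x ∂m) ∧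
      (∀ i, 0 ≤ g i (σ^[n] ω) ∧ ∫ x, (g i (σ^[n] ω)) x ∂m = 1) ∧
      (∀ i j, i ≠ j → g i (σ^[n] ω) ⊓ g j (σ^[n] ω) = 0) ∧
      (∀ i, P (σ^[n] ω) (g i (σ^[n] ω)) = g (ρ (σ^[n] ω) i) (σ (σ^[n] ω)))} with hGooddef
  have hGoodae : ∀ᵐ ω ∂Pr, ω ∈ Good := by
    simp only [hGooddef, Set.mem_setOf_eq]
    exact ae_all_iff.2 fun n => (hσ.iterate n).quasiMeasurePreserving.ae hQ
  have hGoodσ : ∀ ω ∈ Good, ∀ n : ℕ, σ^[n] ω ∈ Good := by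
    intro ω hω n k
    rw [← Function.iterate_add_apply]
    exact hω (k + n)
  -- separability and a dense sequence of good points
  set T : Ω → (Fin r → Lp ℝ 1 m) := fun ω i => g i ω with hT
  have hTsep : TopologicalSpace.IsSeparable (T '' Good) := by
    refine (TopologicalSpace.IsSeparable.univ_pi
      (fun i => ((hgmeas i).isSeparable_range).closure)).mono ?_
    rintro _ ⟨ω, -, rfl⟩
    simp only [Set.mem_univ_pi]
    intro i
    exact subset_closure ⟨ω, rfl⟩
  obtain ⟨t, htsub, htc, htd⟩ := hTsep.exists_countable_dense_subset
  have hne : (Filter.NeBot (ae Pr)) := ae_neBot.2 (IsProbabilityMeasure.ne_zero Pr)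
  obtain ⟨ω₀, hω₀⟩ := hGoodae.exists
  have htne : t.Nonempty := by
    have h0 : T ω₀ ∈ closure t := htd ⟨ω₀, hω₀, rfl⟩
    rcases t.eq_empty_or_nonempty with h | h
    · rw [h, closure_empty] at h0; exact absurd h0 (Set.notMem_empty _)
    · exact h
  obtain ⟨e, he⟩ := htc.exists_eq_range htne
  have hek : ∀ k : ℕ, ∃ w, w ∈ Good ∧ T w = e k := by
    intro k
    have hmem : e k ∈ t := by rw [he]; exact Set.mem_range_self k
    rcases htsub hmem with ⟨w, hw, hwT⟩
    exact ⟨w, hw, hwT⟩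
  choose ωe hωeG hωeT using hek
  have hdense : ∀ ω' ∈ Good, ∀ ε : ℝ, 0 < ε → ∃ k, ∀ i, dist (g i ω') (g i (ωe k)) < ε := by
    intro ω' hω' ε hε
    have h0 : T ω' ∈ closure t := htd ⟨ω', hω', rfl⟩
    rw [he] at h0
    obtain ⟨y, hy, hdy⟩ := Metric.mem_closure_iff.1 h0 ε hε
    obtain ⟨k, rfl⟩ := hy
    refine ⟨k, fun i => ?_⟩
    have hi := (dist_pi_lt_iff hε).1 hdy i
    rw [← hωeT k] at hi
    exact hi
  -- the good tuples at the points ωe k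
  have hQat : ∀ k : ℕ, (∀ i, 0 ≤ g i (ωe k) ∧ ∫ x, (g i (ωe k)) x ∂m = 1) ∧
      (∀ i j, i ≠ j → g i (ωe k) ⊓ g j (ωe k) = 0) := by
    intro k
    have h := hωeG k 0
    simp only [Function.iterate_zero, id] at h
    exact ⟨h.2.2.1, h.2.2.2.1⟩
  -- indicator functions of the supports
  have hsmeas : ∀ k : ℕ, MeasurableSet {x | 0 < (g i₀ (ωe k)) x} := fun k =>
    measurableSet_lt measurable_const (Lp.stronglyMeasurable (g i₀ (ωe k))).measurable
  set φ : ℕ → Lp ℝ ⊤ m := fun k =>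
    indicatorConstLp ⊤ (hsmeas k) (measure_ne_top m _) (1:ℝ) with hφ
  have hφnorm : ∀ k, ‖φ k‖ ≤ 1 := by
    intro k
    have h1 : ‖φ k‖ = (eLpNorm (⇑(φ k)) ⊤ m).toReal := Lp.norm_def _
    rw [h1, eLpNorm_congr_ae indicatorConstLp_coeFn, eLpNorm_exponent_top]
    have h2 := eLpNormEssSup_indicator_const_le (μ := m) {x | 0 < (g i₀ (ωe k)) x} (1:ℝ)
    refine le_trans (ENNReal.toReal_mono (by simp) h2) ?_
    simp
  have hpair1 : ∀ k, ∫ x, (g i₀ (ωe k)) x * (φ k) x ∂m = 1 := by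
    intro k
    have hnn : (0 : X → ℝ) ≤ᵐ[m] (g i₀ (ωe k)) := (Lp.coeFn_nonneg _).2 ((hQat k).1 i₀).1
    have hcongr : (fun x => (g i₀ (ωe k)) x * (φ k) x) =ᵐ[m]
        fun x => (g i₀ (ωe k)) x := by
      filter_upwards [indicatorConstLp_coeFn (μ := m) (p := ⊤) (hs := hsmeas k)
        (hμs := measure_ne_top m _) (c := (1:ℝ)), hnn] with x h1 h2
      simp only [Pi.zero_apply] at h2
      by_cases hx : 0 < (g i₀ (ωe k)) x
      · rw [h1, Set.indicator_apply, if_pos (show x ∈ {x | 0 < (g i₀ (ωe k)) x} from hx), mul_one]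
      · have h0 : (g i₀ (ωe k)) x = 0 := le_antisymm (not_lt.1 hx) h2
        rw [h0, zero_mul]
    rw [integral_congr_ae hcongr]
    exact ((hQat k).1 i₀).2
  have hpair0 : ∀ k, ∀ j, j ≠ i₀ → ∫ x, (g j (ωe k)) x * (φ k) x ∂m = 0 := by
    intro k j hj
    have hinf : (g i₀ (ωe k) ⊓ g j (ωe k) : Lp ℝ 1 m) = 0 :=
      (hQat k).2 i₀ j (Ne.symm hj)
    have h0 : ⇑(g i₀ (ωe k) ⊓ g j (ωe k)) =ᵐ[m] (0 : X → ℝ) := by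
      rw [hinf]; exact Lp.coeFn_zero (E := ℝ) (p := 1) (μ := m)
    have hinf' : ∀ᵐ x ∂m, min ((g i₀ (ωe k)) x) ((g j (ωe k)) x) = 0 := by
      filter_upwards [Lp.coeFn_inf (g i₀ (ωe k)) (g j (ωe k)), h0] with x h1 h2
      have h3 := h1.symm.trans h2
      simpa [Pi.inf_apply] using h3
    have hnnj : (0 : X → ℝ) ≤ᵐ[m] (g j (ωe k)) := (Lp.coeFn_nonneg _).2 ((hQat k).1 j).1
    have hcongr : (fun x => (g j (ωe k)) x * (φ k) x) =ᵐ[m] fun _ => (0:ℝ) := by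
      filter_upwards [indicatorConstLp_coeFn (μ := m) (p := ⊤) (hs := hsmeas k)
        (hμs := measure_ne_top m _) (c := (1:ℝ)), hinf', hnnj] with x h1 h2 h3
      simp only [Pi.zero_apply] at h3
      by_cases hx : 0 < (g i₀ (ωe k)) x
      · have hj0 : (g j (ωe k)) x = 0 := by
          by_contra hne'
          have hjpos : 0 < (g j (ωe k)) x := lt_of_le_of_ne h3 (Ne.symm hne')
          have := lt_min hx hjpos
          rw [h2] at this
          exact lt_irrefl _ this
        rw [hj0, zero_mul]
      · rw [h1, Set.indicator_apply, if_neg (show x ∉ {x | 0 < (g i₀ (ωe k)) x} from hx), mul_zero]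
    rw [integral_congr_ae hcongr, integral_zero]
  -- the measurable selection
  have hDmeas : ∀ k : ℕ, MeasurableSet {ω | ∀ i, dist (g i ω) (g i (ωe k)) < δ} := by
    intro k
    have hmeas : ∀ i : Fin r, Measurable fun ω => dist (g i ω) (g i (ωe k)) := fun i =>
      ((continuous_id.dist continuous_const).comp_stronglyMeasurable (hgmeas i)).measurable
    have hset : {ω | ∀ i, dist (g i ω) (g i (ωe k)) < δ} =
        ⋂ i, (fun ω => dist (g i ω) (g i (ωe k))) ⁻¹' Set.Iio δ := by
      ext ω; simp [Set.mem_iInter]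
    rw [hset]
    exact MeasurableSet.iInter fun i => (hmeas i) measurableSet_Iio
  set sel : Ω → ℕ := fun ω =>
    if h : ∃ k : ℕ, ∀ i, dist (g i ω) (g i (ωe k)) < δ then Nat.find h else 0 with hsel
  have hselmeas : Measurable sel := by
    apply measurable_to_countable'
    intro n
    have heq : sel ⁻¹' {n} =
        ((⋃ k, {ω | ∀ i, dist (g i ω) (g i (ωe k)) < δ})ᶜ ∩ {ω : Ω | n = 0}) ∪
        ({ω | ∀ i, dist (g i ω) (g i (ωe n)) < δ} ∩
          ⋂ (j : ℕ), ⋂ (_ : j < n), {ω | ∀ i, dist (g i ω) (g i (ωe j)) < δ}ᶜ) := by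
      ext ω
      simp only [Set.mem_preimage, Set.mem_singleton_iff, Set.mem_union, Set.mem_inter_iff,
        Set.mem_compl_iff, Set.mem_iUnion, Set.mem_iInter, Set.mem_setOf_eq, hsel]
      by_cases h : ∃ k : ℕ, ∀ i, dist (g i ω) (g i (ωe k)) < δ
      · rw [dif_pos h]
        constructor
        · intro hn
          right
          rw [← hn]
          exact ⟨Nat.find_spec h, fun j hj => Nat.find_min h hj⟩
        · rintro (⟨hc, -⟩ | ⟨h1, h2⟩)
          · exact absurd h hc
          · exact (Nat.find_eq_iff h).2 ⟨h1, fun j hj => h2 j hj⟩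
      · rw [dif_neg h]
        constructor
        · intro h0
          left
          exact ⟨h, h0.symm⟩
        · rintro (⟨-, h0⟩ | ⟨h1, -⟩)
          · exact h0.symm
          · exact absurd ⟨n, h1⟩ h
    rw [heq]
    refine MeasurableSet.union ?_ ?_
    · refine ((MeasurableSet.iUnion fun k => hDmeas k).compl).inter ?_
      by_cases hn : n = 0 <;> simp [hn]
    · exact (hDmeas n).inter (MeasurableSet.iInter fun j =>
        MeasurableSet.iInter fun _ => (hDmeas j).compl)
  set G : Ω → Lp ℝ ⊤ m := fun ω => φ (sel ω) with hG
  have hGmeas : StronglyMeasurable G :=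
    continuous_of_discreteTopology.comp_stronglyMeasurable hselmeas.stronglyMeasurable
  have hGbd : ∀ ω, ‖G ω‖ ≤ 1 := fun ω => hφnorm _
  set fk : ℕ → Lp ℝ 1 m := fun k =>
    ((r:ℝ)⁻¹ • (∑ i, g i (ωe k)) - g i₀ (ωe k) : Lp ℝ 1 m) with hfk
  have hfk0 : ∀ k, ∫ x, (fk k) x ∂m = 0 := by
    intro k
    have h1 : ∀ i : Fin r, ∫ x, (g i (ωe k)) x ∂m = 1 := fun i => ((hQat k).1 i).2
    have := integral_comb (m := m) ((r:ℝ)⁻¹) (fun i => g i (ωe k)) (g i₀ (ωe k))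
    rw [hfk]
    simp only
    rw [this, h1 i₀]
    simp only [h1]
    rw [Finset.sum_const, Finset.card_univ, Fintype.card_fin]
    field_simp
    simp [nsmul_eq_mul]
  have hmix : ∀ᵐ ω ∂Pr, ∀ k : ℕ, Tendsto
      (fun n => ∫ x, (coc P σ n ω (fk k)) x * (G (σ^[n] ω)) x ∂m) atTop (𝓝 0) :=
    ae_all_iff.2 fun k => H (fk k) (hfk0 k) G hGmeas ⟨1, hGbd⟩
  obtain ⟨w, hwGood, hwmix⟩ := (hGoodae.and hmix).exists
  -- cocycle acting on the densities
  have hcocg : ∀ n : ℕ, ∀ i, coc P σ n w (g i w) = g ((coc ρ σ n w) i) (σ^[n] w) := by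
    intro n
    induction n with
    | zero =>
      intro i
      simp [coc_zero, Module.End.one_apply, Equiv.Perm.coe_one]
    | succ n ih =>
      intro i
      rw [coc_succ, coc_succ, Module.End.mul_apply, ih i, Equiv.Perm.mul_apply,
        Function.iterate_succ_apply']
      exact (hwGood n).2.2.2.2 ((coc ρ σ n w) i)
  -- the pairings are close to 0/1
  have hA : ∀ n : ℕ, ∀ j, |∫ x, (g j (σ^[n] w)) x * (G (σ^[n] w)) x ∂m -
      (if j = i₀ then (1:ℝ) else 0)| ≤ δ := by
    intro n j
    have hwn : σ^[n] w ∈ Good := hGoodσ w hwGood n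
    have hex : ∃ k : ℕ, ∀ i, dist (g i (σ^[n] w)) (g i (ωe k)) < δ := hdense _ hwn δ hδpos
    have hseleq : sel (σ^[n] w) = Nat.find hex := by rw [hsel]; exact dif_pos hex
    have hspec : ∀ i, dist (g i (σ^[n] w)) (g i (ωe (sel (σ^[n] w)))) < δ := by
      rw [hseleq]; exact Nat.find_spec hex
    have hGk : G (σ^[n] w) = φ (sel (σ^[n] w)) := rfl
    have hbase : ∫ x, (g j (ωe (sel (σ^[n] w)))) x * (φ (sel (σ^[n] w))) x ∂m =
        (if j = i₀ then (1:ℝ) else 0) := by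
      by_cases hj : j = i₀
      · rw [if_pos hj, hj]; exact hpair1 _
      · rw [if_neg hj]; exact hpair0 _ j hj
    rw [hGk, ← hbase, ← pair_sub]
    calc |∫ x, ((g j (σ^[n] w) - g j (ωe (sel (σ^[n] w))) : Lp ℝ 1 m)) x *
          (φ (sel (σ^[n] w))) x ∂m|
        ≤ ‖g j (σ^[n] w) - g j (ωe (sel (σ^[n] w)))‖ * ‖φ (sel (σ^[n] w))‖ :=
          pair_abs_le _ _
      _ ≤ δ * 1 := by
          refine mul_le_mul ?_ (hφnorm _) (norm_nonneg _) hδpos.le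
          rw [← dist_eq_norm]
          exact (hspec j).le
      _ = δ := mul_one δ
  -- the main lower bound
  set Fw : Lp ℝ 1 m := ((r:ℝ)⁻¹ • (∑ i, g i w) - g i₀ w : Lp ℝ 1 m) with hFw
  have hV : ∀ n : ℕ, (r:ℝ)⁻¹/2 ≤
      |∫ x, (coc P σ n w Fw) x * (G (σ^[n] w)) x ∂m| := by
    intro n
    have hco : coc P σ n w Fw =
        ((r:ℝ)⁻¹ • (∑ i, g ((coc ρ σ n w) i) (σ^[n] w)) -
          g ((coc ρ σ n w) i₀) (σ^[n] w) : Lp ℝ 1 m) := by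
      rw [hFw]
      rw [map_sub, _root_.map_smul, map_sum]
      congr 1
      · congr 1
        exact Finset.sum_congr rfl fun i _ => hcocg n i
      · exact hcocg n i₀
    rw [hco, pair_comb]
    have hsum : (∑ i, ∫ x, (g ((coc ρ σ n w) i) (σ^[n] w)) x * (G (σ^[n] w)) x ∂m) =
        ∑ j, ∫ x, (g j (σ^[n] w)) x * (G (σ^[n] w)) x ∂m :=
      Equiv.sum_comp (coc ρ σ n w)
        (fun j => ∫ x, (g j (σ^[n] w)) x * (G (σ^[n] w)) x ∂m)
    rw [hsum]
    set S := ∑ j, ∫ x, (g j (σ^[n] w)) x * (G (σ^[n] w)) x ∂m with hSdef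
    set a := ∫ x, (g ((coc ρ σ n w) i₀) (σ^[n] w)) x * (G (σ^[n] w)) x ∂m with hadef
    have hxpos : 0 < (r:ℝ)⁻¹ := by positivity
    have hxle : (r:ℝ)⁻¹ ≤ 2⁻¹ := by
      rw [inv_le_inv₀ hr0 (by norm_num : (0:ℝ) < 2)]
      exact hr2
    have hδx : δ = (r:ℝ)⁻¹/4 := by rw [hδdef, mul_inv]; ring
    have hS : |S - 1| ≤ (r:ℝ) * δ := by
      have h1 : ∑ j : Fin r, (if j = i₀ then (1:ℝ) else 0) = 1 := by simp
      calc |S - 1| = |∑ j, (∫ x, (g j (σ^[n] w)) x * (G (σ^[n] w)) x ∂m -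
            if j = i₀ then (1:ℝ) else 0)| := by
            rw [Finset.sum_sub_distrib, h1]
        _ ≤ ∑ j, |∫ x, (g j (σ^[n] w)) x * (G (σ^[n] w)) x ∂m -
            if j = i₀ then (1:ℝ) else 0| := Finset.abs_sum_le_sum_abs _ _
        _ ≤ ∑ _j : Fin r, δ := Finset.sum_le_sum fun j _ => hA n j
        _ = (r:ℝ) * δ := by
            rw [Finset.sum_const, Finset.card_univ, Fintype.card_fin, nsmul_eq_mul]
    have hrδ : (r:ℝ) * δ = 4⁻¹ := by
      rw [hδdef]
      field_simp
    rw [hrδ] at hS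
    obtain ⟨hS1, hS2⟩ := abs_le.1 hS
    have ha := hA n ((coc ρ σ n w) i₀)
    by_cases hcase : (coc ρ σ n w) i₀ = i₀
    · rw [if_pos hcase] at ha
      obtain ⟨ha1, ha2⟩ := abs_le.1 ha
      refine le_abs.2 (Or.inr ?_)
      have hSub : (r:ℝ)⁻¹ * S ≤ (r:ℝ)⁻¹ * (5/4) :=
        mul_le_mul_of_nonneg_left (by linarith) hxpos.le
      rw [← hadef] at ha1 ha2
      linarith [hδx, hxle]
    · rw [if_neg hcase, sub_zero] at ha
      obtain ⟨ha1, ha2⟩ := abs_le.1 ha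
      refine le_abs.2 (Or.inl ?_)
      have hSub : (r:ℝ)⁻¹ * (3/4) ≤ (r:ℝ)⁻¹ * S :=
        mul_le_mul_of_nonneg_left (by linarith) hxpos.le
      rw [← hadef] at ha1 ha2
      linarith [hδx]
  -- approximation and contradiction
  set ε : ℝ := (8 * (r:ℝ))⁻¹ with hε
  have hεpos : 0 < ε := by rw [hε]; positivity
  obtain ⟨k, hk⟩ := hdense w hwGood ε hεpos
  have hFdiff : ‖Fw - fk k‖ ≤ 2 * ε := by
    have h1 : Fw - fk k = ((r:ℝ)⁻¹ • ((∑ i, g i w) - (∑ i, g i (ωe k))) -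
        (g i₀ w - g i₀ (ωe k)) : Lp ℝ 1 m) := by
      rw [hFw, hfk]
      simp only
      module
    rw [h1]
    have h2 : ‖(∑ i, g i w) - (∑ i, g i (ωe k))‖ ≤ (r:ℝ) * ε := by
      rw [← Finset.sum_sub_distrib]
      calc ‖∑ i, (g i w - g i (ωe k))‖ ≤ ∑ i, ‖g i w - g i (ωe k)‖ :=
            norm_sum_le _ _
        _ ≤ ∑ _i : Fin r, ε := Finset.sum_le_sum fun i _ => by
            rw [← dist_eq_norm]; exact (hk i).le
        _ = (r:ℝ) * ε := by
            rw [Finset.sum_const, Finset.card_univ, Fintype.card_fin, nsmul_eq_mul]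
    have h3 : ‖g i₀ w - g i₀ (ωe k)‖ ≤ ε := by
      rw [← dist_eq_norm]; exact (hk i₀).le
    calc ‖((r:ℝ)⁻¹ • ((∑ i, g i w) - (∑ i, g i (ωe k))) -
          (g i₀ w - g i₀ (ωe k)) : Lp ℝ 1 m)‖
        ≤ ‖(r:ℝ)⁻¹ • ((∑ i, g i w) - (∑ i, g i (ωe k)) : Lp ℝ 1 m)‖ +
          ‖(g i₀ w - g i₀ (ωe k) : Lp ℝ 1 m)‖ := norm_sub_le _ _
      _ ≤ (r:ℝ)⁻¹ * ((r:ℝ) * ε) + ε := by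
          rw [norm_smul, Real.norm_eq_abs, abs_of_pos (by positivity : (0:ℝ) < (r:ℝ)⁻¹)]
          exact add_le_add (mul_le_mul_of_nonneg_left h2 (by positivity)) h3
      _ = 2 * ε := by field_simp; ring
  have hcontr : ∀ n : ℕ, ∀ u : Lp ℝ 1 m, ‖coc P σ n w u‖ ≤ ‖u‖ := by
    intro n
    induction n with
    | zero => intro u; simp [coc_zero, Module.End.one_apply]
    | succ n ih =>
      intro u
      rw [coc_succ, Module.End.mul_apply]
      exact le_trans (markov_contraction _ (hwGood n).1 (hwGood n).2.1 _) (ih u)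
  obtain ⟨N, hN⟩ := Metric.tendsto_atTop.1 (hwmix k) ((r:ℝ)⁻¹/4) (by positivity)
  have hVN := hV N
  have hdiffN : |∫ x, (coc P σ N w Fw) x * (G (σ^[N] w)) x ∂m -
      ∫ x, (coc P σ N w (fk k)) x * (G (σ^[N] w)) x ∂m| ≤ 2 * ε := by
    rw [← pair_sub, ← map_sub]
    calc |∫ x, (coc P σ N w (Fw - fk k)) x * (G (σ^[N] w)) x ∂m|
        ≤ ‖coc P σ N w (Fw - fk k)‖ * ‖G (σ^[N] w)‖ := pair_abs_le _ _
      _ ≤ (2*ε) * 1 := mul_le_mul (le_trans (hcontr N _) hFdiff) (hGbd _)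
          (norm_nonneg _) (by positivity)
      _ = 2*ε := mul_one _
  have hWN := hN N le_rfl
  rw [Real.dist_eq, sub_zero] at hWN
  have habs : |∫ x, (coc P σ N w Fw) x * (G (σ^[N] w)) x ∂m| ≤
      2*ε + |∫ x, (coc P σ N w (fk k)) x * (G (σ^[N] w)) x ∂m| := by
    have := abs_add_le (∫ x, (coc P σ N w Fw) x * (G (σ^[N] w)) x ∂m -
      ∫ x, (coc P σ N w (fk k)) x * (G (σ^[N] w)) x ∂m)
      (∫ x, (coc P σ N w (fk k)) x * (G (σ^[N] w)) x ∂m)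
    simp only [sub_add_cancel] at this
    linarith
  have h2ε : 2 * ε = (r:ℝ)⁻¹/4 := by
    rw [hε, mul_inv]
    ring
  linarith
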